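/- Let a > 0 and t > a (the supercritical regime, r = 1). Then lim_{x → 0⁺} √x·ρ(x;1,t,a) = √(t−a)/(πt); in particular ρ(x;1,t,a) ≃ C₂(t,a)·x^{−1/2} as x → 0⁺ with C₂(t,a) = √(t−a)/(πt), and C₂(t,a) ≃ (1/(πa))·(t − a)^{1/2} as t → a⁺, i.e. lim_{t → a⁺} (t−a)^{−1/2}·√(t−a)/(πt) = 1/(πa). -/

import Mathlib

open Filter Topology

/-- The real cube root. -/
noncomputable def cbrt (y : ℝ) : ℝ :=
  if 0 ≤ y then y ^ ((1 : ℝ)/3) else -((-y) ^ ((1 : ℝ)/3))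

/-- The cubic polynomial `S(x; r, t, a)`. -/
noncomputable def S (x r t a : ℝ) : ℝ :=
  4*a*x^3 - (8*a^2 + 4*a*(3*r+2)*t - t^2)*x^2
    + 2*(2*a^3 - 2*a^2*(5*r-2)*t + a*(r*(6*r-1)+1)*t^2 - (r+1)*t^3)*x
    + (r-1)^2*t^2*(a^2 - a*(4*r-2)*t + t^2)

/-- The function `g(x; r, t, a)`. -/
noncomputable def g (x r t a : ℝ) : ℝ :=
  -2*x^3 + 3*((2*r+1)*t + 6*a)*x^2
    - 3*((r-1)*((2*r+1)*t - 3*a)*t - Real.sqrt (-3 * S x r t a))*x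
    + 2*(r-1)^3*t^3

/-- The function `φ(x; r, t, a)`. -/
noncomputable def phi (x r t a : ℝ) : ℝ :=
  -(2/3)*(x - (r-1)*t)
    - (cbrt 2 / 3) * ((x^2 + (3*a - (2*r+1)*t)*x + (r-1)^2*t^2) / cbrt (g x r t a))
    - cbrt (g x r t a) / (3 * cbrt 2)

/-- The function `D(x; r, t, a) = -4aφ + (t-a)²`. -/
noncomputable def Df (x r t a : ℝ) : ℝ := -4*a*phi x r t a + (t-a)^2

/-- The three-parametric Marcenko–Pastur density `ρ(x; r, t, a)`. -/
noncomputable def rho (x r t a : ℝ) : ℝ :=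
  Real.sqrt (2*(t - a + Real.sqrt (Df x r t a))*x - (phi x r t a)^2)
    / (2*Real.pi*r*t*x)

/-- The real part `R(x; r, t, a)` of the boundary value of the Green's function. -/
noncomputable def Rf (x r t a : ℝ) : ℝ :=
  (2*x + (r-1)*t)/(3*r*t*x)
    - (x^2 + (3*a - (2*r+1)*t)*x + (r-1)^2*t^2) / (3 * (cbrt 2)^2 * r * t * cbrt (g x r t a) * x)
    - cbrt (g x r t a) / (6 * cbrt 2 * r * t * x)

lemma cbrt_of_nonneg {y : ℝ} (hy : 0 ≤ y) : cbrt y = y ^ ((1:ℝ)/3) := if_pos hy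

lemma cbrt_pos {y : ℝ} (hy : 0 < y) : 0 < cbrt y := by
  rw [cbrt_of_nonneg hy.le]; exact Real.rpow_pos_of_pos hy _

lemma cbrt_cube {y : ℝ} (hy : 0 ≤ y) : (cbrt y)^3 = y := by
  rw [cbrt_of_nonneg hy, ← Real.rpow_natCast (y ^ ((1:ℝ)/3)) 3, ← Real.rpow_mul hy]
  norm_num

lemma cbrt_div {y z : ℝ} (hy : 0 ≤ y) (hz : 0 ≤ z) : cbrt (y/z) = cbrt y / cbrt z := by
  rw [cbrt_of_nonneg hy, cbrt_of_nonneg hz, cbrt_of_nonneg (div_nonneg hy hz),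
    Real.div_rpow hy hz]

lemma cbrt_sqrt_cube (x : ℝ) : cbrt ((Real.sqrt x)^3) = Real.sqrt x := by
  have h : (0:ℝ) ≤ (Real.sqrt x)^3 := pow_nonneg (Real.sqrt_nonneg x) 3
  rw [cbrt_of_nonneg h, ← Real.rpow_natCast (Real.sqrt x) 3,
    ← Real.rpow_mul (Real.sqrt_nonneg x)]
  norm_num

lemma cbrt_continuousAt {L : ℝ} (hL : 0 < L) : ContinuousAt cbrt L := by
  have h1 : ContinuousAt (fun y : ℝ => y ^ ((1:ℝ)/3)) L :=
    Real.continuousAt_rpow_const L _ (Or.inl hL.ne')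
  apply h1.congr
  filter_upwards [eventually_gt_nhds hL] with y hy
  exact (cbrt_of_nonneg hy.le).symm

lemma cube_inj {p q : ℝ} (hp : 0 ≤ p) (hq : 0 ≤ q) (h : p^3 = q^3) : p = q := by
  rcases lt_trichotomy p q with h' | h' | h'
  · exact absurd h (pow_lt_pow_left₀ h' hp (by norm_num)).ne
  · exact h'
  · exact absurd h.symm (pow_lt_pow_left₀ h' hq (by norm_num)).ne

lemma part1 (a t : ℝ) (ha : 0 < a) (hat : a < t) :
    Tendsto (fun x : ℝ => Real.sqrt x * rho x 1 t a) (𝓝[>] (0:ℝ))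
      (𝓝 (Real.sqrt (t - a) / (Real.pi * t))) := by
  have ht : 0 < t := ha.trans hat
  have hta : 0 < t - a := sub_pos.mpr hat
  set l := 𝓝[>] (0:ℝ) with hl
  have hx_pos : ∀ᶠ x in l, 0 < x := eventually_mem_nhdsWithin
  have Tx : Tendsto (fun x : ℝ => x) l (𝓝 0) := tendsto_id.mono_left nhdsWithin_le_nhds
  have Tsqrt : Tendsto (fun x : ℝ => Real.sqrt x) l (𝓝 0) := by
    have := (Real.continuous_sqrt.tendsto 0).comp Tx
    rw [Real.sqrt_zero] at this; exact this
  -- the polynomial factorization of S at r = 1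
  have hSid : ∀ x : ℝ, S x 1 t a
      = x * (4*a*x^2 - (8*a^2+20*a*t-t^2)*x + 4*(a-t)^3) := by
    intro x; simp only [S]; ring
  have TS : Tendsto (fun x => -3 * S x 1 t a / x) l (𝓝 (12*(t-a)^3)) := by
    have hc : Continuous (fun x : ℝ =>
        -3*(4*a*x^2 - (8*a^2+20*a*t-t^2)*x + 4*(a-t)^3)) := by continuity
    have hcont : Tendsto (fun x : ℝ =>
        -3*(4*a*x^2 - (8*a^2+20*a*t-t^2)*x + 4*(a-t)^3)) (𝓝 0) (𝓝 (12*(t-a)^3)) := by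
      convert hc.tendsto 0 using 2
      ring
    apply (hcont.mono_left nhdsWithin_le_nhds).congr'
    filter_upwards [hx_pos] with x hx
    rw [hSid x]
    field_simp
  have h12 : (0:ℝ) < 12*(t-a)^3 := mul_pos (by norm_num) (pow_pos hta 3)
  have hS3pos : ∀ᶠ x in l, 0 < -3 * S x 1 t a := by
    filter_upwards [TS.eventually (eventually_gt_nhds h12), hx_pos] with x h hx
    have h2 : -3 * S x 1 t a = (-3 * S x 1 t a / x) * x := (div_mul_cancel₀ _ hx.ne').symm
    rw [h2]; exact mul_pos h hx
  have Tsq : Tendsto (fun x => Real.sqrt (-3 * S x 1 t a / x)) l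
      (𝓝 (Real.sqrt (12*(t-a)^3))) := (Real.continuous_sqrt.tendsto _).comp TS
  have gid : ∀ x : ℝ, g x 1 t a
      = -2*x^3 + 9*(t+2*a)*x^2 + 3*Real.sqrt (-3 * S x 1 t a)*x := by
    intro x; simp only [g]; ring
  have hL : (0:ℝ) < 3*Real.sqrt (12*(t-a)^3) :=
    mul_pos (by norm_num) (Real.sqrt_pos.mpr h12)
  have Th : Tendsto (fun x => g x 1 t a / (Real.sqrt x)^3) l
      (𝓝 (3*Real.sqrt (12*(t-a)^3))) := by
    have T2 : Tendsto (fun x : ℝ => -2*x+9*(t+2*a)) l (𝓝 (9*(t+2*a))) := by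
      have hc : Continuous fun x : ℝ => -2*x+9*(t+2*a) := by continuity
      have h' : Tendsto (fun x : ℝ => -2*x+9*(t+2*a)) (𝓝 0) (𝓝 (9*(t+2*a))) := by
        convert hc.tendsto 0 using 2
        ring
      exact h'.mono_left nhdsWithin_le_nhds
    have T1 : Tendsto (fun x : ℝ => Real.sqrt x * (-2*x+9*(t+2*a))) l (𝓝 0) := by
      simpa using Tsqrt.mul T2
    have T4 := T1.add (Tsq.const_mul 3)
    have T4' : Tendsto (fun x => Real.sqrt x * (-2*x+9*(t+2*a))
        + 3*Real.sqrt (-3 * S x 1 t a / x)) l (𝓝 (3*Real.sqrt (12*(t-a)^3))) := by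
      simpa using T4
    apply T4'.congr'
    filter_upwards [hx_pos, hS3pos] with x hx hS3
    have hsx : 0 < Real.sqrt x := Real.sqrt_pos.mpr hx
    rw [Real.sqrt_div hS3.le, gid x]
    set s := Real.sqrt x with hs
    have hxx : s * s = x := Real.mul_self_sqrt hx.le
    rw [← hxx]
    field_simp
  have hgpos : ∀ᶠ x in l, 0 < g x 1 t a := by
    filter_upwards [Th.eventually (eventually_gt_nhds hL), hx_pos] with x h hx
    have hsx : (0:ℝ) < (Real.sqrt x)^3 := pow_pos (Real.sqrt_pos.mpr hx) 3
    have h2 : g x 1 t a = g x 1 t a / (Real.sqrt x)^3 * (Real.sqrt x)^3 :=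
      (div_mul_cancel₀ _ hsx.ne').symm
    rw [h2]; exact mul_pos h hsx
  have Th' : Tendsto (fun x => cbrt (g x 1 t a) / Real.sqrt x) l
      (𝓝 (cbrt (3*Real.sqrt (12*(t-a)^3)))) := by
    have hcomp := ((cbrt_continuousAt hL).tendsto).comp Th
    apply hcomp.congr'
    filter_upwards [hx_pos, hgpos] with x hx hg
    show cbrt (g x 1 t a / (Real.sqrt x)^3) = cbrt (g x 1 t a) / Real.sqrt x
    rw [cbrt_div hg.le (pow_nonneg (Real.sqrt_nonneg x) 3), cbrt_sqrt_cube]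
  set c := cbrt (3*Real.sqrt (12*(t-a)^3)) with hcdef
  have hc : 0 < c := cbrt_pos hL
  have hm : 0 < cbrt 2 := cbrt_pos (by norm_num)
  have hm3 : (cbrt 2)^3 = 2 := cbrt_cube (by norm_num)
  have hc3 : c^3 = 3*Real.sqrt (12*(t-a)^3) := cbrt_cube hL.le
  have hc2 : c^2 = 3*(cbrt 2)^2*(t-a) := by
    apply cube_inj (sq_nonneg c)
      (mul_nonneg (mul_nonneg (by norm_num) (sq_nonneg _)) hta.le)
    have hs2 : (Real.sqrt (12*(t-a)^3))^2 = 12*(t-a)^3 := Real.sq_sqrt h12.le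
    calc (c^2)^3 = (c^3)^2 := by ring
      _ = 9*(Real.sqrt (12*(t-a)^3))^2 := by rw [hc3]; ring
      _ = 108*(t-a)^3 := by rw [hs2]; ring
      _ = 27*((cbrt 2)^3)^2*(t-a)^3 := by rw [hm3]; norm_num
      _ = (3*(cbrt 2)^2*(t-a))^3 := by ring
  have hVal : -(2/3)*(0:ℝ) - cbrt 2/3*((0 + 3*(a - t))/c) - c/(3*cbrt 2) = 0 := by
    field_simp
    linear_combination (-1 : ℝ) * hc2
  have TR : Tendsto (fun x => -(2/3)*Real.sqrt x
      - cbrt 2/3*((x + 3*(a - t))/(cbrt (g x 1 t a)/Real.sqrt x))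
      - (cbrt (g x 1 t a)/Real.sqrt x)/(3*cbrt 2)) l (𝓝 0) := by
    have h := ((Tsqrt.const_mul (-(2/3))).sub
      (((Tx.add_const (3*(a-t))).div Th' hc.ne').const_mul (cbrt 2/3))).sub
      (Th'.div_const (3*cbrt 2))
    rwa [hVal] at h
  have Tphis : Tendsto (fun x => phi x 1 t a / Real.sqrt x) l (𝓝 0) := by
    apply TR.congr'
    filter_upwards [hx_pos, hgpos] with x hx hg
    have hsx : 0 < Real.sqrt x := Real.sqrt_pos.mpr hx
    have hG : 0 < cbrt (g x 1 t a) := cbrt_pos hg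
    simp only [phi]
    set s := Real.sqrt x with hs
    have hxx : s * s = x := Real.mul_self_sqrt hx.le
    rw [← hxx] at hG ⊢
    field_simp
    ring
  have Tphi : Tendsto (fun x => phi x 1 t a) l (𝓝 0) := by
    have h := Tphis.mul Tsqrt
    have h' : Tendsto (fun x => phi x 1 t a / Real.sqrt x * Real.sqrt x) l (𝓝 0) := by
      simpa using h
    apply h'.congr'
    filter_upwards [hx_pos] with x hx
    exact div_mul_cancel₀ _ (Real.sqrt_pos.mpr hx).ne'
  have TD : Tendsto (fun x => Real.sqrt (Df x 1 t a)) l (𝓝 (t-a)) := by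
    have h1 : Tendsto (fun x => Df x 1 t a) l (𝓝 ((t-a)^2)) := by
      have := (Tphi.const_mul (-4*a)).add_const ((t-a)^2)
      simp only [Df]
      simpa using this
    have h2 := (Real.continuous_sqrt.tendsto _).comp h1
    rwa [Real.sqrt_sq hta.le] at h2
  have TF : Tendsto (fun x => 2*(t - a + Real.sqrt (Df x 1 t a))
      - (phi x 1 t a/Real.sqrt x)^2) l (𝓝 (4*(t-a))) := by
    have h := ((TD.const_add (t-a)).const_mul 2).sub (Tphis.pow 2)
    have hv : (4*(t-a) : ℝ) = 2*(t-a+(t-a)) - 0^2 := by ring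
    rw [hv]
    exact h
  have Tfin : Tendsto (fun x => Real.sqrt (2*(t - a + Real.sqrt (Df x 1 t a))
      - (phi x 1 t a/Real.sqrt x)^2) / (2*Real.pi*t)) l
      (𝓝 (Real.sqrt (t-a)/(Real.pi*t))) := by
    have h1 := ((Real.continuous_sqrt.tendsto _).comp TF).div_const (2*Real.pi*t)
    have h2 : Real.sqrt (4*(t-a))/(2*Real.pi*t) = Real.sqrt (t-a)/(Real.pi*t) := by
      rw [show (4:ℝ)*(t-a) = 2^2*(t-a) by ring,
        Real.sqrt_mul (by norm_num : (0:ℝ) ≤ 2^2), Real.sqrt_sq (by norm_num : (0:ℝ) ≤ 2)]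
      rw [div_eq_div_iff (by positivity) (by positivity)]
      ring
    rwa [h2] at h1
  apply Tfin.congr'
  filter_upwards [hx_pos] with x hx
  have hsx : 0 < Real.sqrt x := Real.sqrt_pos.mpr hx
  simp only [rho]
  have hE : 2*(t - a + Real.sqrt (Df x 1 t a))*x - (phi x 1 t a)^2
      = (2*(t - a + Real.sqrt (Df x 1 t a)) - (phi x 1 t a/Real.sqrt x)^2) * x := by
    rw [div_pow, Real.sq_sqrt hx.le]
    field_simp
  rw [hE, Real.sqrt_mul' _ hx.le]
  set s := Real.sqrt x with hs
  have hxx : s * s = x := Real.mul_self_sqrt hx.le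
  rw [← hxx]
  have hpi : Real.pi ≠ 0 := Real.pi_ne_zero
  field_simp

theorem stmt_15 (a : ℝ) (ha : 0 < a) :
    (∀ t : ℝ, a < t →
      Filter.Tendsto (fun x : ℝ => Real.sqrt x * rho x 1 t a)
        (nhdsWithin 0 (Set.Ioi 0))
        (nhds (Real.sqrt (t - a) / (Real.pi * t))))
    ∧ Filter.Tendsto (fun t : ℝ => (t - a) ^ (-(1:ℝ)/2) * (Real.sqrt (t - a) / (Real.pi * t)))
        (nhdsWithin a (Set.Ioi a)) (nhds (1/(Real.pi * a))) := by
  constructor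
  · exact fun t hat => part1 a t ha hat
  · have hcont : ContinuousAt (fun t : ℝ => 1/(Real.pi*t)) a := by
      apply ContinuousAt.div continuousAt_const (continuousAt_const.mul continuousAt_id)
      exact (mul_pos Real.pi_pos ha).ne'
    have h2 : Tendsto (fun t : ℝ => 1/(Real.pi*t)) (𝓝[>] a) (𝓝 (1/(Real.pi*a))) :=
      hcont.tendsto.mono_left nhdsWithin_le_nhds
    apply h2.congr'
    filter_upwards [eventually_mem_nhdsWithin] with t ht
    have hta : 0 < t - a := sub_pos.mpr ht
    rw [Real.sqrt_eq_rpow]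
    rw [show (-(1:ℝ)/2 : ℝ) = -((1:ℝ)/2) by norm_num, Real.rpow_neg hta.le]
    have hne : (t-a)^((1:ℝ)/2) ≠ 0 := (Real.rpow_pos_of_pos hta _).ne'
    have h1 : (1:ℝ)/2 = ((1:ℝ)/2 : ℝ) := rfl
    field_simp
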